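/- Let X and Y be multisets (Boolean spaces equipped with continuous denominator maps into 𝒩), and let x ∈ X, y ∈ Y be such that ζ_X(x) ≥ ζ_Y(y). If ζ_Y(y) is a finite supernatural number and Y contains an element of denominator ν₁ (the bottom supernatural number), then there exists a continuous denominator-decreasing map f : X → Y with f(x) = y. -/
import Mathlib

/-- Supernatural numbers: functions from primes to ℕ ∪ {∞}, ordered pointwise. -/
abbrev Supernatural := Nat.Primes → ℕ∞

/-- The topology on supernatural numbers generated by `{ν : ν(p) > k}`. -/
def supernaturalTopology : TopologicalSpace Supernatural :=
  TopologicalSpace.generateFrom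
    {U | ∃ (p : Nat.Primes) (k : ℕ), U = {ν : Supernatural | (k : ℕ∞) < ν p}}

/-- A supernatural number is finite if it never takes the value ∞ and is nonzero
only at finitely many primes. -/
def Supernatural.Finite (ν : Supernatural) : Prop :=
  (∀ p, ν p ≠ ⊤) ∧ {p | ν p ≠ 0}.Finite

/-- Given multisets `(X, ζX)` and `(Y, ζY)`, points `x ∈ X`, `y ∈ Y` with
`ζX x ≥ ζY y`, if `ζY y` is finite and `Y` has a point of denominator `ν₁ = ⊥`,
then there is a morphism of multisets `f : X → Y` with `f x = y`. -/
theorem exists_multiset_morphism {X Y : Type*}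
    [TopologicalSpace X] [CompactSpace X] [T2Space X] [TotallyDisconnectedSpace X]
    [TopologicalSpace Y] [CompactSpace Y] [T2Space Y] [TotallyDisconnectedSpace Y]
    (ζX : X → Supernatural) (ζY : Y → Supernatural)
    (hζX : @Continuous X Supernatural _ supernaturalTopology ζX)
    (hζY : @Continuous Y Supernatural _ supernaturalTopology ζY)
    (x : X) (y : Y) (hxy : ζY y ≤ ζX x)
    (hfin : (ζY y).Finite) (hbot : ∃ y₁ : Y, ζY y₁ = ⊥) :
    ∃ f : X → Y, Continuous f ∧ (∀ a : X, ζY (f a) ≤ ζX a) ∧ f x = y := by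
  classical
  obtain ⟨y₁, hy₁⟩ := hbot
  obtain ⟨hne, hfinset⟩ := hfin
  set S := hfinset.toFinset with hS
  set V : Set X := ⋂ p ∈ S, {a | (((ζY y p).toNat - 1 : ℕ) : ℕ∞) < ζX a p} with hV
  -- For p in S, ζY y p is a positive natural
  have hcast : ∀ p, ζY y p = ((ζY y p).toNat : ℕ∞) := fun p =>
    (ENat.coe_toNat (hne p)).symm
  have hle : ∀ (p : Nat.Primes) (m : ℕ∞),
      (((ζY y p).toNat - 1 : ℕ) : ℕ∞) < m → ζY y p ≤ m := by
    intro p m hm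
    rcases eq_or_ne (ζY y p) 0 with h0 | h0
    · simp [h0]
    · have h1 : 1 ≤ (ζY y p).toNat := by
        rw [Nat.one_le_iff_ne_zero]
        intro h
        exact h0 (by rw [hcast p, h]; rfl)
      rw [hcast p]
      have := Order.add_one_le_of_lt hm
      calc ((ζY y p).toNat : ℕ∞) = (((ζY y p).toNat - 1 : ℕ) : ℕ∞) + 1 := by
            exact_mod_cast (Nat.sub_add_cancel h1).symm
        _ ≤ m := this
  have hVopen : IsOpen V := by
    apply isOpen_biInter_finset
    intro p _
    have hsub : @IsOpen Supernatural supernaturalTopology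
        {ν : Supernatural | (((ζY y p).toNat - 1 : ℕ) : ℕ∞) < ν p} :=
      TopologicalSpace.GenerateOpen.basic _ ⟨p, _, rfl⟩
    exact @Continuous.isOpen_preimage _ _ _ supernaturalTopology _ hζX _ hsub
  have hxV : x ∈ V := by
    refine Set.mem_iInter₂.2 fun p hp => ?_
    have h0 : ζY y p ≠ 0 := by simpa [hS] using hp
    have h1 : 1 ≤ (ζY y p).toNat := by
      rw [Nat.one_le_iff_ne_zero]
      intro h
      exact h0 (by rw [hcast p, h]; rfl)
    have : (((ζY y p).toNat - 1 : ℕ) : ℕ∞) < ζY y p := by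
      rw [hcast p]
      exact_mod_cast Nat.sub_lt h1 Nat.one_pos
    exact this.trans_le (hxy p)
  obtain ⟨U, hU, hxU, hUV⟩ := compact_exists_isClopen_in_isOpen hVopen hxV
  refine ⟨fun a => if a ∈ U then y else y₁, ?_, ?_, by simp [hxU]⟩
  · apply continuous_if
    · intro a ha
      rw [Set.setOf_mem_eq, hU.frontier_eq] at ha
      exact absurd ha (Set.notMem_empty a)
    · exact continuous_const.continuousOn
    · exact continuous_const.continuousOn
  · intro a
    by_cases ha : a ∈ U
    · simp only [if_pos ha]
      intro p
      by_cases hp : p ∈ S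
      · exact hle p _ (Set.mem_iInter₂.1 (hUV ha) p hp)
      · have : ζY y p = 0 := by
          by_contra h
          exact hp (by simpa [hS] using h)
        simp [this]
    · simp [if_neg ha, hy₁]
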